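/- Let f : ℝ^{n×m} → ℝ be continuously differentiable, λ > 0, μ > 0. Suppose (Ū, V̄) ∈ ℝ^{n×r} × ℝ^{m×r} is a local minimizer of Φ_{λ,μ}. Then J_Ū = J_V̄ =: J, and the submatrix pair (Ū_J, V̄_J) ∈ ℝ^{n×|J|} × ℝ^{m×|J|} is a local minimizer of the function (A,B) ↦ f(ABᵀ) + (μ/2)(‖A‖_F² + ‖B‖_F²) on ℝ^{n×|J|} × ℝ^{m×|J|}. -/
import Mathlib


open Filter Topology Matrix
open scoped Classical

attribute [local instance] Matrix.frobeniusSeminormedAddCommGroup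
  Matrix.frobeniusNormedAddCommGroup Matrix.frobeniusNormedSpace

/-- The Frobenius (trace) inner product `⟨A,B⟩ = trace(AᵀB) = ∑ᵢⱼ Aᵢⱼ Bᵢⱼ` on matrices. -/
noncomputable def frobInner {α β : Type*} [Fintype α] [Fintype β] (A B : Matrix α β ℝ) : ℝ :=
  ∑ i, ∑ j, A i j * B i j

/-- The column `ℓ_{2,0}`-norm: the number of nonzero columns. -/
noncomputable def l20 {α β : Type*} [Fintype α] [Fintype β] (A : Matrix α β ℝ) : ℕ :=
  {j : β | (fun i => A i j) ≠ 0}.ncard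

/-- `F_μ(U,V) = f(UVᵀ) + (μ/2)(‖U‖_F² + ‖V‖_F²)`, for factors with columns indexed
by an arbitrary finite type `γ`. -/
noncomputable def Fmu {n m : ℕ} {γ : Type*} [Fintype γ] (f : Matrix (Fin n) (Fin m) ℝ → ℝ)
    (mu : ℝ) (U : Matrix (Fin n) γ ℝ) (V : Matrix (Fin m) γ ℝ) : ℝ :=
  f (U * Vᵀ) + mu / 2 * (frobInner U U + frobInner V V)

/-- `Φ_{λ,μ}(U,V) = f(UVᵀ) + (μ/2)(‖U‖_F² + ‖V‖_F²) + λ(‖U‖_{2,0} + ‖V‖_{2,0})`. -/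
noncomputable def Phi {n m r : ℕ} (f : Matrix (Fin n) (Fin m) ℝ → ℝ) (lam mu : ℝ)
    (U : Matrix (Fin n) (Fin r) ℝ) (V : Matrix (Fin m) (Fin r) ℝ) : ℝ :=
  Fmu f mu U V + lam * ((l20 U : ℝ) + (l20 V : ℝ))

/-- The squared Frobenius norm of a pair: `‖(U,V)‖_F² = ‖U‖_F² + ‖V‖_F²`. -/
noncomputable def pairNormSq {α β γ : Type*} [Fintype α] [Fintype β] [Fintype γ]
    (U : Matrix α γ ℝ) (V : Matrix β γ ℝ) : ℝ :=
  frobInner U U + frobInner V V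

/- ############ auxiliary lemmas ############ -/

lemma sum_dite_subtype {r : ℕ} (p : Fin r → Prop) [Fintype {j // p j}] (g : {j // p j} → ℝ) :
    ∑ j : Fin r, (if h : p j then g ⟨j, h⟩ else 0) = ∑ s : {j // p j}, g s := by
  calc ∑ j : Fin r, (if h : p j then g ⟨j, h⟩ else 0)
      = ∑ j ∈ Finset.univ.filter p, (if h : p j then g ⟨j, h⟩ else 0) :=
        (Finset.sum_subset (Finset.filter_subset _ _)
          (fun x _ hx => dif_neg (by simpa using hx))).symm
    _ = ∑ s : {j // p j}, (if h : p s.1 then g ⟨s.1, h⟩ else 0) :=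
        Finset.sum_subtype _ (by simp) _
    _ = ∑ s : {j // p j}, g s := Finset.sum_congr rfl (fun s _ => by rw [dif_pos s.2])

/-- Extension of a matrix indexed by the subtype `{j // p j}` by zero columns. -/
noncomputable def extMat {k r : ℕ} (p : Fin r → Prop) (A : Matrix (Fin k) {j // p j} ℝ) :
    Matrix (Fin k) (Fin r) ℝ :=
  Matrix.of fun i j => if h : p j then A i ⟨j, h⟩ else 0

lemma extMat_mul {n m r : ℕ} (p : Fin r → Prop) [Fintype {j // p j}] (A : Matrix (Fin n) {j // p j} ℝ)
    (B : Matrix (Fin m) {j // p j} ℝ) :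
    extMat p A * (extMat p B)ᵀ = A * Bᵀ := by
  ext i k
  simp only [Matrix.mul_apply, Matrix.transpose_apply, extMat, Matrix.of_apply]
  rw [← sum_dite_subtype p (fun s => A i s * B k s)]
  refine Finset.sum_congr rfl fun j _ => ?_
  by_cases h : p j <;> simp [h]

lemma extMat_frob {k r : ℕ} (p : Fin r → Prop) [Fintype {j // p j}] (A A' : Matrix (Fin k) {j // p j} ℝ) :
    frobInner (extMat p A) (extMat p A') = frobInner A A' := by
  unfold frobInner extMat
  refine Finset.sum_congr rfl fun i _ => ?_
  rw [← sum_dite_subtype p (fun s => A i s * A' i s)]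
  refine Finset.sum_congr rfl fun j _ => ?_
  by_cases h : p j <;> simp [h]

lemma extMat_sub {k r : ℕ} (p : Fin r → Prop) (A A' : Matrix (Fin k) {j // p j} ℝ) :
    extMat p A - extMat p A' = extMat p (A - A') := by
  ext i j
  by_cases h : p j <;> simp [extMat, h]

lemma extMat_l20_le {k r : ℕ} (p : Fin r → Prop) (A : Matrix (Fin k) {j // p j} ℝ) :
    l20 (extMat p A) ≤ {j | p j}.ncard := by
  refine Set.ncard_le_ncard ?_ (Set.toFinite _)
  intro j hj
  simp only [Set.mem_setOf_eq] at hj ⊢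
  by_contra h
  exact hj (funext fun i => by simp [extMat, dif_neg h])

lemma extMat_eq_self {k r : ℕ} (p : Fin r → Prop) (M : Matrix (Fin k) (Fin r) ℝ)
    (hM : ∀ j, ¬ p j → (fun i => M i j) = 0) :
    extMat p (Matrix.of fun i (s : {j // p j}) => M i s.1) = M := by
  ext i j
  by_cases h : p j
  · simp [extMat, h]
  · simpa [extMat, h] using (congrFun (hM j h) i).symm

lemma Phi_swap {n m r : ℕ} (f : Matrix (Fin n) (Fin m) ℝ → ℝ) (lam mu : ℝ)
    (U : Matrix (Fin n) (Fin r) ℝ) (V : Matrix (Fin m) (Fin r) ℝ) :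
    Phi (fun X => f Xᵀ) lam mu V U = Phi f lam mu U V := by
  unfold Phi Fmu
  simp only [Matrix.transpose_mul, Matrix.transpose_transpose]
  ring

/-- Core lemma: if the `j0`-th column of `Vbar` is zero, then so is that of `Ubar`. -/
lemma zero_col_key {n m r : ℕ} (f : Matrix (Fin n) (Fin m) ℝ → ℝ)
    (lam mu : ℝ) (hmu : 0 < mu)
    (Ubar : Matrix (Fin n) (Fin r) ℝ) (Vbar : Matrix (Fin m) (Fin r) ℝ)
    (hmin : ∃ ε > (0:ℝ), ∀ (U : Matrix (Fin n) (Fin r) ℝ) (V : Matrix (Fin m) (Fin r) ℝ),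
        Real.sqrt (pairNormSq (U - Ubar) (V - Vbar)) ≤ ε →
        Phi f lam mu Ubar Vbar ≤ Phi f lam mu U V)
    (j0 : Fin r) (hV : (fun i => Vbar i j0) = 0) : (fun i => Ubar i j0) = 0 := by
  by_contra hU
  obtain ⟨ε, hε, hloc⟩ := hmin
  set c : ℝ := ∑ i, (Ubar i j0) * (Ubar i j0) with hc
  have hcnn : ∀ i ∈ Finset.univ, 0 ≤ Ubar i j0 * Ubar i j0 := fun i _ => mul_self_nonneg _
  have hc0 : 0 < c := by
    rcases lt_or_eq_of_le (Finset.sum_nonneg hcnn) with h | h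
    · exact h
    · exfalso
      apply hU
      funext i
      have := (Finset.sum_eq_zero_iff_of_nonneg hcnn).mp h.symm i (Finset.mem_univ i)
      exact mul_self_eq_zero.mp this
  have hsc : 0 < Real.sqrt c + 1 := by positivity
  set t : ℝ := min (1/2) (ε / (Real.sqrt c + 1)) with ht
  have ht0 : 0 < t := lt_min (by norm_num) (div_pos hε hsc)
  have ht1 : t ≤ 1/2 := min_le_left _ _
  have htε : t * Real.sqrt c ≤ ε := by
    have h1 : t * Real.sqrt c ≤ t * (Real.sqrt c + 1) := by nlinarith [ht0.le]
    have h2 : t * (Real.sqrt c + 1) ≤ (ε / (Real.sqrt c + 1)) * (Real.sqrt c + 1) := by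
      exact mul_le_mul_of_nonneg_right (min_le_right _ _) hsc.le
    rw [div_mul_cancel₀ _ (ne_of_gt hsc)] at h2
    linarith
  set U' : Matrix (Fin n) (Fin r) ℝ :=
    Matrix.of (fun i j => if j = j0 then (1 - t) * Ubar i j else Ubar i j) with hU'
  -- distance
  have hdist : pairNormSq (U' - Ubar) (Vbar - Vbar) = t^2 * c := by
    unfold pairNormSq frobInner
    have h2 : (∑ i, ∑ j, (Vbar - Vbar) i j * (Vbar - Vbar) i j) = 0 := by
      simp
    rw [h2, add_zero]
    have h1 : ∀ i, (∑ j, (U' - Ubar) i j * (U' - Ubar) i j)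
        = t^2 * (Ubar i j0 * Ubar i j0) := by
      intro i
      rw [Finset.sum_eq_single j0]
      · have hentry : U' i j0 = (1 - t) * Ubar i j0 := by simp [hU']
        rw [Matrix.sub_apply, hentry]
        ring
      · intro j _ hj
        simp [hU', hj]
      · intro h; exact absurd (Finset.mem_univ j0) h
    rw [Finset.sum_congr rfl (fun i _ => h1 i), ← Finset.mul_sum, hc]
  have hsqrt : Real.sqrt (pairNormSq (U' - Ubar) (Vbar - Vbar)) ≤ ε := by
    rw [hdist, Real.sqrt_mul (sq_nonneg t), Real.sqrt_sq ht0.le]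
    exact htε
  have hPhile := hloc U' Vbar hsqrt
  -- now show Phi f lam mu U' Vbar < Phi f lam mu Ubar Vbar
  have hfeq : U' * Vbarᵀ = Ubar * Vbarᵀ := by
    ext i k
    simp only [Matrix.mul_apply, Matrix.transpose_apply]
    refine Finset.sum_congr rfl fun j _ => ?_
    by_cases hj : j = j0
    · subst hj
      have : Vbar k j = 0 := congrFun hV k
      simp [this]
    · simp [hU', hj]
  have hl20 : l20 U' = l20 Ubar := by
    unfold l20
    congr 1
    ext j
    by_cases hj : j = j0
    · subst hj
      have hcol : (fun i => U' i j) = fun i => (1 - t) * Ubar i j := by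
        funext i; simp [hU']
      simp only [Set.mem_setOf_eq, hcol]
      constructor
      · intro _; exact hU
      · intro _
        intro hcontra
        apply hU
        funext i
        have := congrFun hcontra i
        simp only [Pi.zero_apply] at this
        have h1t : (1:ℝ) - t ≠ 0 := by linarith
        simpa [Pi.zero_apply] using (mul_eq_zero.mp this).resolve_left h1t
    · have hcol : (fun i => U' i j) = fun i => Ubar i j := by
        funext i; simp [hU', hj]
      simp only [Set.mem_setOf_eq, hcol]
  have hfrob : frobInner U' U' = frobInner Ubar Ubar + ((1-t)^2 - 1) * c := by
    unfold frobInner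
    have key : ∀ i j, U' i j * U' i j
        = Ubar i j * Ubar i j + (if j = j0 then ((1-t)^2 - 1) * (Ubar i j0 * Ubar i j0) else 0) := by
      intro i j
      by_cases hj : j = j0
      · subst hj
        have hentry : U' i j = (1 - t) * Ubar i j := by simp [hU']
        rw [hentry, if_pos rfl]
        ring
      · simp [hU', hj]
    calc ∑ i, ∑ j, U' i j * U' i j
        = ∑ i, ∑ j, (Ubar i j * Ubar i j
            + (if j = j0 then ((1-t)^2 - 1) * (Ubar i j0 * Ubar i j0) else 0)) := by
          refine Finset.sum_congr rfl fun i _ => Finset.sum_congr rfl fun j _ => key i j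
      _ = ∑ i, ((∑ j, Ubar i j * Ubar i j) + ((1-t)^2 - 1) * (Ubar i j0 * Ubar i j0)) := by
          refine Finset.sum_congr rfl fun i _ => ?_
          rw [Finset.sum_add_distrib, Finset.sum_ite_eq' Finset.univ j0]
          simp
      _ = (∑ i, ∑ j, Ubar i j * Ubar i j) + ((1-t)^2 - 1) * c := by
          rw [Finset.sum_add_distrib, ← Finset.mul_sum, hc]
  have hlt : Phi f lam mu U' Vbar < Phi f lam mu Ubar Vbar := by
    unfold Phi Fmu
    rw [hfeq, hl20, hfrob]
    have h1t2 : (1-t)^2 - 1 < 0 := by nlinarith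
    have : mu / 2 * (((1-t)^2 - 1) * c) < 0 := by
      apply mul_neg_of_pos_of_neg (by positivity)
      exact mul_neg_of_neg_of_pos h1t2 hc0
    ring_nf
    ring_nf at this
    nlinarith [this]
  linarith

lemma pairNormSq_comm {α β γ : Type*} [Fintype α] [Fintype β] [Fintype γ]
    (U : Matrix α γ ℝ) (V : Matrix β γ ℝ) : pairNormSq U V = pairNormSq V U := by
  unfold pairNormSq; ring

/-- if `(Ū,V̄)` is a local minimizer of `Φ_{λ,μ}`, then `J_Ū = J_V̄ =: J`
and the submatrix pair `(Ū_J, V̄_J)` of nonzero columns is a local minimizer of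
`(A,B) ↦ f(ABᵀ) + (μ/2)(‖A‖_F² + ‖B‖_F²)` on `ℝ^{n×|J|} × ℝ^{m×|J|}`. -/
theorem local_min_Phi_imp_Fmu {n m r : ℕ}
    (f : Matrix (Fin n) (Fin m) ℝ → ℝ) (hf : ContDiff ℝ 1 f)
    (lam mu : ℝ) (hlam : 0 < lam) (hmu : 0 < mu)
    (Ubar : Matrix (Fin n) (Fin r) ℝ) (Vbar : Matrix (Fin m) (Fin r) ℝ)
    (hmin : ∃ ε > (0:ℝ), ∀ (U : Matrix (Fin n) (Fin r) ℝ) (V : Matrix (Fin m) (Fin r) ℝ),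
        Real.sqrt (pairNormSq (U - Ubar) (V - Vbar)) ≤ ε →
        Phi f lam mu Ubar Vbar ≤ Phi f lam mu U V) :
    (∀ j : Fin r, (fun i => Ubar i j) ≠ 0 ↔ (fun i => Vbar i j) ≠ 0) ∧
      (∃ δ > (0:ℝ),
        ∀ (A : Matrix (Fin n) {j : Fin r // (fun i => Ubar i j) ≠ 0} ℝ)
          (B : Matrix (Fin m) {j : Fin r // (fun i => Ubar i j) ≠ 0} ℝ),
          Real.sqrt (pairNormSq (A - Matrix.of fun i j => Ubar i j.1)
            (B - Matrix.of fun i j => Vbar i j.1)) ≤ δ →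
          Fmu f mu (Matrix.of fun i (j : {j : Fin r // (fun i => Ubar i j) ≠ 0}) => Ubar i j.1)
              (Matrix.of fun i j => Vbar i j.1) ≤ Fmu f mu A B) := by
  -- swapped local minimality
  have hmin' : ∃ ε > (0:ℝ), ∀ (V : Matrix (Fin m) (Fin r) ℝ) (U : Matrix (Fin n) (Fin r) ℝ),
      Real.sqrt (pairNormSq (V - Vbar) (U - Ubar)) ≤ ε →
      Phi (fun X => f Xᵀ) lam mu Vbar Ubar ≤ Phi (fun X => f Xᵀ) lam mu V U := by
    obtain ⟨ε, hε, hloc⟩ := hmin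
    refine ⟨ε, hε, fun V U hd => ?_⟩
    rw [Phi_swap, Phi_swap]
    exact hloc U V (by rwa [pairNormSq_comm])
  have key1 : ∀ j : Fin r, (fun i => Vbar i j) = 0 → (fun i => Ubar i j) = 0 :=
    fun j hj => zero_col_key f lam mu hmu Ubar Vbar hmin j hj
  have key2 : ∀ j : Fin r, (fun i => Ubar i j) = 0 → (fun i => Vbar i j) = 0 :=
    fun j hj => zero_col_key (fun X => f Xᵀ) lam mu hmu Vbar Ubar hmin' j hj
  have hiff : ∀ j : Fin r, (fun i => Ubar i j) ≠ 0 ↔ (fun i => Vbar i j) ≠ 0 := by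
    intro j
    constructor
    · intro h hc; exact h (key1 j hc)
    · intro h hc; exact h (key2 j hc)
  refine ⟨hiff, ?_⟩
  obtain ⟨ε, hε, hloc⟩ := hmin
  refine ⟨ε, hε, fun A B hd => ?_⟩
  -- extensions
  have hUeq : extMat (fun j => (fun i => Ubar i j) ≠ 0)
      (Matrix.of fun i (s : {j // (fun i => Ubar i j) ≠ 0}) => Ubar i s.1) = Ubar :=
    extMat_eq_self _ Ubar (fun j hj => not_not.mp hj)
  have hVeq : extMat (fun j => (fun i => Ubar i j) ≠ 0)
      (Matrix.of fun i (s : {j // (fun i => Ubar i j) ≠ 0}) => Vbar i s.1) = Vbar :=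
    extMat_eq_self _ Vbar (fun j hj => key2 j (not_not.mp hj))
  set EA := extMat (fun j => (fun i => Ubar i j) ≠ 0) A with hEA
  set EB := extMat (fun j => (fun i => Ubar i j) ≠ 0) B with hEB
  -- distance transported
  have hsubU : EA - Ubar = extMat (fun j => (fun i => Ubar i j) ≠ 0)
      (A - Matrix.of fun i (s : {j // (fun i => Ubar i j) ≠ 0}) => Ubar i s.1) := by
    rw [hEA, ← extMat_sub, hUeq]
  have hsubV : EB - Vbar = extMat (fun j => (fun i => Ubar i j) ≠ 0)
      (B - Matrix.of fun i (s : {j // (fun i => Ubar i j) ≠ 0}) => Vbar i s.1) := by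
    rw [hEB, ← extMat_sub, hVeq]
  have hdist : pairNormSq (EA - Ubar) (EB - Vbar)
      = pairNormSq (A - Matrix.of fun i (s : {j // (fun i => Ubar i j) ≠ 0}) => Ubar i s.1)
          (B - Matrix.of fun i (s : {j // (fun i => Ubar i j) ≠ 0}) => Vbar i s.1) := by
    unfold pairNormSq
    rw [hsubU, hsubV, extMat_frob, extMat_frob]
  have hloc' := hloc EA EB (by rw [hdist]; exact hd)
  -- l20 inequalities
  have hl20U : (l20 EA : ℝ) ≤ (l20 Ubar : ℝ) := by
    have h1 : l20 Ubar = {j : Fin r | (fun i => Ubar i j) ≠ 0}.ncard := rfl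
    have h2 := extMat_l20_le (fun j => (fun i => Ubar i j) ≠ 0) A
    rw [← hEA] at h2
    exact_mod_cast h1 ▸ h2
  have hl20V : (l20 EB : ℝ) ≤ (l20 Vbar : ℝ) := by
    have hset : {j : Fin r | (fun i => Vbar i j) ≠ 0}
        = {j : Fin r | (fun i => Ubar i j) ≠ 0} := by
      ext j; exact (hiff j).symm
    have h1 : l20 Vbar = {j : Fin r | (fun i => Ubar i j) ≠ 0}.ncard := by
      unfold l20; rw [hset]
    have h2 := extMat_l20_le (fun j => (fun i => Ubar i j) ≠ 0) B
    rw [← hEB] at h2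
    exact_mod_cast h1 ▸ h2
  -- Fmu equalities
  have hFmu1 : Fmu f mu EA EB = Fmu f mu A B := by
    rw [hEA, hEB]
    unfold Fmu
    rw [extMat_mul, extMat_frob, extMat_frob]
  have hFmu2 : Fmu f mu Ubar Vbar
      = Fmu f mu (Matrix.of fun i (s : {j // (fun i => Ubar i j) ≠ 0}) => Ubar i s.1)
          (Matrix.of fun i (s : {j // (fun i => Ubar i j) ≠ 0}) => Vbar i s.1) := by
    have h3 : Fmu f mu (extMat (fun j => (fun i => Ubar i j) ≠ 0)
          (Matrix.of fun i (s : {j // (fun i => Ubar i j) ≠ 0}) => Ubar i s.1))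
        (extMat (fun j => (fun i => Ubar i j) ≠ 0)
          (Matrix.of fun i (s : {j // (fun i => Ubar i j) ≠ 0}) => Vbar i s.1))
        = Fmu f mu (Matrix.of fun i (s : {j // (fun i => Ubar i j) ≠ 0}) => Ubar i s.1)
          (Matrix.of fun i (s : {j // (fun i => Ubar i j) ≠ 0}) => Vbar i s.1) := by
      unfold Fmu
      rw [extMat_mul, extMat_frob, extMat_frob]
    rw [← h3, hUeq, hVeq]
  unfold Phi at hloc'
  rw [hFmu1] at hloc'
  rw [← hFmu2]
  have hmul : lam * ((l20 EA : ℝ) + (l20 EB : ℝ)) ≤ lam * ((l20 Ubar : ℝ) + (l20 Vbar : ℝ)) :=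
    mul_le_mul_of_nonneg_left (add_le_add hl20U hl20V) hlam.le
  linarith
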